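/- (Observability of the perfect augmented system with invariant EKF; containment part of Theorem 3.) Fix g, p_F ∈ ℝ³ and let T ∈ ℕ, δ₁, …, δ_T ∈ ℝ, and for each t ∈ {0, …, T} let R̂_{I,t}, R̂_{G,t} ∈ ℝ^{3×3}, v̂_t, p̂_{I,t}, p̂_{f,t}, p̂_{G,t} ∈ ℝ³ and J_t, J'_t ∈ ℝ^{2×3} be arbitrary. Define A_t as the error-propagation matrix with the step-t estimates, the state-transition matrix Φ_{t|0} = exp(δ_t A_t) ⋯ exp(δ₁ A₁) (with Φ_{0|0} = I), and the Jacobians H_{L,t} = −J_t R̂_{I,t}ᵀ [0₃ 0₃ I₃ −I₃ 0₃ 0₃ 0₃ 0₃] and H_{G,t} = −J'_t R̂_{I,t}ᵀ [−(R̂_{G,t} p_F)_× 0₃ I₃ 0₃ −I₃ (R̂_{G,t} p_F)_× 0₃ 0₃]. Then for every t, H_{L,t} Φ_{t|0} N = 0 and H_{G,t} Φ_{t|0} N = 0; that is, the columns of the constant matrix N lie in the right null space of every block row of the observability matrix, independently of the (possibly ever-changing) estimated state values. -/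

import Mathlib

open Matrix

abbrev V3 := Fin 3 → ℝ
abbrev M3 := Matrix (Fin 3) (Fin 3) ℝ

/-- The cross-product (skew-symmetric) matrix `(a)_×`. -/
def skew (a : V3) : M3 :=
  !![0, -a 2, a 1; a 2, 0, -a 0; -a 1, a 0, 0]

/-- Row/column index of the 24-dimensional right-invariant error
`(ξ_θ, ξ_v, ξ_p, ξ_pf, ξ_pG, ξ_θG, ξ_bg, ξ_ba)`: 8 blocks of 3. -/
abbrev Idx24 := Fin 8 × Fin 3

/-- 24×24 matrix from an 8×8 table of 3×3 blocks. -/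
def bm8 (f : Fin 8 → Fin 8 → M3) : Matrix Idx24 Idx24 ℝ :=
  Matrix.of fun p q => f p.1 q.1 p.2 q.2

/-- The invariant-EKF error-propagation matrix `A` of the perfect augmented system. -/
def Amat (g : V3) (RI : M3) (v pI pf pG : V3) : Matrix Idx24 Idx24 ℝ :=
  bm8 ![![0, 0, 0, 0, 0, 0, -RI, 0],
        ![skew g, 0, 0, 0, 0, 0, -(skew v * RI), -RI],
        ![0, 1, 0, 0, 0, 0, -(skew pI * RI), 0],
        ![0, 0, 0, 0, 0, 0, -(skew pf * RI), 0],
        ![0, 0, 0, 0, 0, 0, -(skew pG * RI), 0],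
        ![0, 0, 0, 0, 0, 0, 0, 0],
        ![0, 0, 0, 0, 0, 0, 0, 0],
        ![0, 0, 0, 0, 0, 0, 0, 0]]

/-- The constant 24×4 unobservable-direction matrix `N`: first column plus a 24×3 block. -/
def Nmat (g : V3) : Matrix Idx24 (Fin 1 ⊕ Fin 3) ℝ :=
  Matrix.of fun p j =>
    Sum.elim (fun _ => (![g, 0, 0, 0, 0, g, 0, 0] : Fin 8 → V3) p.1 p.2)
      (fun c => (![0, 0, 1, 1, 1, 0, 0, 0] : Fin 8 → M3) p.1 p.2 c) j

/-- A 2×24 measurement Jacobian `B ⬝ [f₀ ⋯ f₇]` from a 2×3 factor `B`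
and an 8-tuple of 3×3 blocks. -/
def rowJac (B : Matrix (Fin 2) (Fin 3) ℝ) (f : Fin 8 → M3) : Matrix (Fin 2) Idx24 ℝ :=
  Matrix.of fun r p => (B * f p.1) r p.2

/-- The state-transition matrix `Φ_{t|0} = exp(δ_t A_t) ⋯ exp(δ₁ A₁)`, `Φ_{0|0} = I`. -/
noncomputable def Phi (δ : ℕ → ℝ) (As : ℕ → Matrix Idx24 Idx24 ℝ) :
    ℕ → Matrix Idx24 Idx24 ℝ
  | 0 => 1
  | t + 1 => NormedSpace.exp (δ (t + 1) • As (t + 1)) * Phi δ As t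


@[simp] lemma vecCons_mk_zero {α : Type*} {n : ℕ} (x : α) (u : Fin n → α) (h : 0 < n + 1) :
    Matrix.vecCons x u ⟨0, h⟩ = x := rfl

@[simp] lemma vecCons_mk_succ {α : Type*} {n : ℕ} (x : α) (u : Fin n → α) (k : ℕ)
    (h : k + 1 < n + 1) :
    Matrix.vecCons x u ⟨k + 1, h⟩ = u ⟨k, Nat.lt_of_succ_lt_succ h⟩ := rfl

set_option maxHeartbeats 1000000 in
lemma AN_eq_zero (g : V3) (RI : M3) (v pI pf pG : V3) :
    Amat g RI v pI pf pG * Nmat g = 0 := by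
  ext ⟨i, a⟩ j
  rw [Matrix.mul_apply, show (Finset.univ : Finset Idx24) = Finset.univ ×ˢ Finset.univ from rfl,
    Finset.sum_product]
  rcases j with j | j <;>
  · simp only [Nmat, Matrix.of_apply, Sum.elim_inl, Sum.elim_inr, Fin.sum_univ_succ,
      Finset.sum_const_zero, Matrix.cons_val_zero, Matrix.cons_val_succ, Fin.sum_univ_zero,
      Pi.zero_apply, Matrix.zero_apply, mul_zero, add_zero, zero_add]
    fin_cases i <;> fin_cases a <;>
      simp only [Amat, bm8, skew, Matrix.of_apply, Matrix.cons_val_zero, Matrix.cons_val_succ,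
        vecCons_mk_zero, vecCons_mk_succ, Matrix.zero_apply, Pi.zero_apply,
        zero_mul, mul_zero, add_zero, zero_add, Matrix.one_apply] <;>
      (try simp only [Fin.succ_zero_eq_one, Fin.succ_one_eq_two]) <;> ring

set_option maxHeartbeats 1000000 in
lemma HN_L_eq_zero (g : V3) (B : Matrix (Fin 2) (Fin 3) ℝ) :
    rowJac B ![0, 0, 1, -1, 0, 0, 0, 0] * Nmat g = 0 := by
  ext r j
  rw [Matrix.mul_apply, show (Finset.univ : Finset Idx24) = Finset.univ ×ˢ Finset.univ from rfl,
    Finset.sum_product]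
  rcases j with j | j <;>
  · simp only [Nmat, Matrix.of_apply, Sum.elim_inl, Sum.elim_inr, Fin.sum_univ_succ,
      Finset.sum_const_zero, Matrix.cons_val_zero, Matrix.cons_val_succ, Fin.sum_univ_zero,
      Pi.zero_apply, Matrix.zero_apply, mul_zero, add_zero, zero_add]
    simp only [rowJac, Matrix.of_apply, Matrix.mul_apply, Fin.sum_univ_succ, Fin.sum_univ_zero,
      Matrix.cons_val_zero, Matrix.cons_val_succ, Matrix.zero_apply, Pi.zero_apply,
      Matrix.neg_apply, Matrix.one_apply, mul_zero, zero_mul, add_zero, zero_add,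
      mul_ite, mul_one, ite_mul, one_mul, neg_mul, mul_neg, neg_zero] <;>
    (try rfl) <;> fin_cases j <;> simp [Fin.ext_iff] <;> ring

set_option maxHeartbeats 1000000 in
lemma HN_G_eq_zero (g s : V3) (B : Matrix (Fin 2) (Fin 3) ℝ) :
    rowJac B ![-skew s, 0, 1, 0, -1, skew s, 0, 0] * Nmat g = 0 := by
  ext r j
  rw [Matrix.mul_apply, show (Finset.univ : Finset Idx24) = Finset.univ ×ˢ Finset.univ from rfl,
    Finset.sum_product]
  rcases j with j | j <;>
  · simp only [Nmat, Matrix.of_apply, Sum.elim_inl, Sum.elim_inr, Fin.sum_univ_succ,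
      Finset.sum_const_zero, Matrix.cons_val_zero, Matrix.cons_val_succ, Fin.sum_univ_zero,
      Pi.zero_apply, Matrix.zero_apply, mul_zero, add_zero, zero_add]
    simp only [rowJac, skew, Matrix.of_apply, Matrix.mul_apply, Fin.sum_univ_succ,
      Fin.sum_univ_zero, Matrix.cons_val_zero, Matrix.cons_val_succ, Matrix.zero_apply,
      Pi.zero_apply, Matrix.neg_apply, Matrix.one_apply, mul_zero, zero_mul, add_zero, zero_add,
      mul_ite, mul_one, ite_mul, one_mul, neg_mul, mul_neg, neg_zero] <;>
    (try simp only [Fin.succ_zero_eq_one, Fin.succ_one_eq_two]) <;>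
    (try ring) <;> fin_cases j <;> simp [Fin.ext_iff] <;> ring

attribute [local instance] Matrix.linftyOpNormedRing Matrix.linftyOpNormedAlgebra
  Matrix.linftyOpNormedAddCommGroup Matrix.linftyOpNormedSpace

lemma exp_mul_eq_of_mul_eq_zero (M : Matrix Idx24 Idx24 ℝ)
    (N : Matrix Idx24 (Fin 1 ⊕ Fin 3) ℝ) (h : M * N = 0) :
    NormedSpace.exp M * N = N := by
  have hpow : ∀ n : ℕ, M ^ (n + 1) * N = 0 := by
    intro n
    rw [pow_succ, Matrix.mul_assoc, h, Matrix.mul_zero]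
  let L : Matrix Idx24 Idx24 ℝ →ₗ[ℝ] Matrix Idx24 (Fin 1 ⊕ Fin 3) ℝ :=
    { toFun := fun X => X * N
      map_add' := fun a b => Matrix.add_mul a b N
      map_smul' := fun c X => Matrix.smul_mul c X N }
  let Lc : Matrix Idx24 Idx24 ℝ →L[ℝ] Matrix Idx24 (Fin 1 ⊕ Fin 3) ℝ :=
    ⟨L, L.continuous_of_finiteDimensional⟩
  have h1 : NormedSpace.exp M * N = Lc (NormedSpace.exp M) := rfl
  rw [h1, NormedSpace.exp_eq_tsum ℝ,
    Lc.map_tsum (NormedSpace.expSeries_summable' (𝕂 := ℝ) M)]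
  have h2 : ∀ n : ℕ, Lc (((n.factorial : ℝ))⁻¹ • M ^ n) = ((n.factorial : ℝ))⁻¹ • (M ^ n * N) :=
    fun n => by simp [Lc, L, Matrix.smul_mul]
  rw [tsum_eq_single 0]
  · simp only [h2, pow_zero, Nat.factorial_zero, Nat.cast_one, inv_one, one_smul]
    exact Matrix.one_mul N
  · intro n hn
    obtain ⟨m, rfl⟩ := Nat.exists_eq_succ_of_ne_zero hn
    simp [h2, hpow]

lemma Phi_mul_N (g : V3) (δ : ℕ → ℝ) (RI : ℕ → M3) (v pI pf pG : ℕ → V3) (t : ℕ) :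
    Phi δ (fun s => Amat g (RI s) (v s) (pI s) (pf s) (pG s)) t * Nmat g = Nmat g := by
  induction t with
  | zero => simp [Phi]
  | succ t ih =>
    rw [Phi, Matrix.mul_assoc, ih]
    exact exp_mul_eq_of_mul_eq_zero _ _ (by
      rw [Matrix.smul_mul, AN_eq_zero, smul_zero])


set_option maxHeartbeats 1000000 in
/-- Observability of the perfect augmented system with the invariant EKF: the columns of
the constant matrix N lie in the right null space of every block row of the
observability matrix, independently of the (ever-changing) estimated state values. -/
theorem perfect_invariant_observability (g pF : V3) (T : ℕ) (δ : ℕ → ℝ)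
    (RI RG : ℕ → M3) (v pI pf pG : ℕ → V3) (J J' : ℕ → Matrix (Fin 2) (Fin 3) ℝ) :
    ∀ t ≤ T,
      rowJac (-(J t * (RI t)ᵀ)) ![0, 0, 1, -1, 0, 0, 0, 0] *
          Phi δ (fun s => Amat g (RI s) (v s) (pI s) (pf s) (pG s)) t * Nmat g = 0 ∧
      rowJac (-(J' t * (RI t)ᵀ))
            ![-skew (RG t *ᵥ pF), 0, 1, 0, -1, skew (RG t *ᵥ pF), 0, 0] *
          Phi δ (fun s => Amat g (RI s) (v s) (pI s) (pf s) (pG s)) t * Nmat g = 0 := by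
  intro t _
  refine ⟨?_, ?_⟩
  · rw [Matrix.mul_assoc, Phi_mul_N]
    exact HN_L_eq_zero g _
  · rw [Matrix.mul_assoc, Phi_mul_N]
    exact HN_G_eq_zero g _ _
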